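/- For every positive integer m, ∑_{d ∣ m} d·f(d) = m·J(m). -/

import Mathlib

/-- `f n = ∏_{p ∣ n, p > 2} (p - 1)/(p - 2)`. -/
noncomputable def f (n : ℕ) : ℝ :=
  ∏ p ∈ n.primeFactors.filter (fun p => 2 < p), ((p : ℝ) - 1) / ((p : ℝ) - 2)

/-- `J m = (2 - 1/2^k) ∏_{p^ℓ ∥ m, p > 2} (1 - 2/p^{ℓ+1})(1 - 2/p)⁻¹`
where `2^k ∥ m`. -/
noncomputable def J (m : ℕ) : ℝ :=
  (2 - 1 / 2 ^ (m.factorization 2)) *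
    ∏ p ∈ m.primeFactors.filter (fun p => 2 < p),
      (1 - 2 / (p : ℝ) ^ (m.factorization p + 1)) * (1 - 2 / (p : ℝ))⁻¹

open ArithmeticFunction Finset
open scoped ArithmeticFunction.zeta

lemma f_one : f 1 = 1 := by simp [f]

lemma f_mul_coprime {a b : ℕ} (ha : a ≠ 0) (hb : b ≠ 0) (hab : a.Coprime b) :
    f (a * b) = f a * f b := by
  unfold f
  rw [Nat.primeFactors_mul ha hb, Finset.filter_union,
    Finset.prod_union (Finset.disjoint_filter_filter hab.disjoint_primeFactors)]

/-- The arithmetic function `d ↦ d * f d`. -/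
noncomputable def g : ArithmeticFunction ℝ := ⟨fun d => (d : ℝ) * f d, by simp⟩

lemma g_mult : g.IsMultiplicative := by
  rw [ArithmeticFunction.IsMultiplicative.iff_ne_zero]
  constructor
  · simp [g, f_one]
  · intro a b ha hb hab
    show ((a * b : ℕ) : ℝ) * f (a * b) = ((a : ℝ) * f a) * ((b : ℝ) * f b)
    rw [f_mul_coprime ha hb hab]
    push_cast
    ring

/-- The factor at prime `p` with exponent `k`. -/
noncomputable def cfac (p k : ℕ) : ℝ :=
  if p = 2 then 2 ^ (k + 1) - 1 else ((p : ℝ) ^ (k + 1) - 2) / ((p : ℝ) - 2)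

lemma f_prime_pow {p : ℕ} (hp : p.Prime) (x : ℕ) :
    f (p ^ (x + 1)) = if 2 < p then ((p : ℝ) - 1) / ((p : ℝ) - 2) else 1 := by
  unfold f
  rw [Nat.primeFactors_pow p (Nat.succ_ne_zero x), hp.primeFactors,
    Finset.filter_singleton]
  by_cases h : 2 < p <;> simp [h]

lemma two_lt_of_prime_ne_two {p : ℕ} (hp : p.Prime) (h : p ≠ 2) : 2 < p :=
  lt_of_le_of_ne hp.two_le (Ne.symm h)

lemma zeta_g_prime_pow {p : ℕ} (hp : p.Prime) (k : ℕ) :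
    ((↑ζ : ArithmeticFunction ℝ) * g) (p ^ k) = cfac p k := by
  rw [coe_zeta_mul_apply, Nat.sum_divisors_prime_pow hp]
  show (∑ x ∈ range (k + 1), ((p ^ x : ℕ) : ℝ) * f (p ^ x)) = cfac p k
  by_cases h2 : p = 2
  · subst h2
    have hone : ∀ x, f (2 ^ x) = 1 := by
      intro x
      cases x with
      | zero => simpa using f_one
      | succ n => rw [f_prime_pow Nat.prime_two]; simp
    simp only [hone, mul_one, Nat.cast_pow, Nat.cast_ofNat]
    rw [geom_sum_eq (by norm_num : (2 : ℝ) ≠ 1)]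
    norm_num [cfac]
  · have hplt : 2 < p := two_lt_of_prime_ne_two hp h2
    have hpR : (2 : ℝ) < (p : ℝ) := by exact_mod_cast hplt
    have hp1 : (p : ℝ) - 1 ≠ 0 := by linarith
    have hp2r : (p : ℝ) - 2 ≠ 0 := by linarith
    have hpne1 : (p : ℝ) ≠ 1 := by linarith
    rw [Finset.sum_range_succ']
    have hterm : ∀ x, ((p ^ (x + 1) : ℕ) : ℝ) * f (p ^ (x + 1))
        = ((p : ℝ) * (((p : ℝ) - 1) / ((p : ℝ) - 2))) * (p : ℝ) ^ x := by
      intro x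
      rw [f_prime_pow hp, if_pos hplt]
      push_cast
      ring
    simp only [hterm]
    rw [← Finset.mul_sum, geom_sum_eq hpne1]
    simp only [pow_zero, Nat.cast_one, f_one, mul_one]
    rw [cfac, if_neg h2]
    field_simp
    ring

lemma cfac_eq_of_lt {p k : ℕ} (hp : 2 < p) :
    cfac p k = (p : ℝ) ^ k *
      ((1 - 2 / (p : ℝ) ^ (k + 1)) * (1 - 2 / (p : ℝ))⁻¹) := by
  have hpR : (2 : ℝ) < (p : ℝ) := by exact_mod_cast hp
  have hp0 : (p : ℝ) ≠ 0 := by linarith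
  have hp2r : (p : ℝ) - 2 ≠ 0 := by linarith
  have hpk : (p : ℝ) ^ (k + 1) ≠ 0 := pow_ne_zero _ hp0
  have hinv : (1 - 2 / (p : ℝ)) = ((p : ℝ) - 2) / (p : ℝ) := by field_simp
  rw [cfac, if_neg (by omega : p ≠ 2), hinv]
  rw [div_eq_iff hp2r]
  field_simp
  ring

lemma mJ_eq_prod {m : ℕ} (hm : m ≠ 0) :
    (m : ℝ) * J m = ∏ p ∈ m.primeFactors, cfac p (m.factorization p) := by
  have hmprod : (m : ℝ) = ∏ p ∈ m.primeFactors, (p : ℝ) ^ (m.factorization p) := by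
    conv_lhs => rw [← Nat.factorization_prod_pow_eq_self hm]
    rw [Finsupp.prod]
    push_cast
    rfl
  have hsplit : ∀ F : ℕ → ℝ, (∏ p ∈ m.primeFactors, F p)
      = (∏ p ∈ m.primeFactors.filter (fun p => 2 < p), F p)
        * ∏ p ∈ m.primeFactors.filter (fun p => ¬ 2 < p), F p := by
    intro F
    rw [Finset.prod_filter_mul_prod_filter_not]
  have hT : (∏ p ∈ m.primeFactors.filter (fun p => ¬ 2 < p),
        (p : ℝ) ^ (m.factorization p)) * (2 - 1 / 2 ^ (m.factorization 2))
      = ∏ p ∈ m.primeFactors.filter (fun p => ¬ 2 < p), cfac p (m.factorization p) := by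
    by_cases h2 : 2 ∈ m.primeFactors
    · have hTeq : m.primeFactors.filter (fun p => ¬ 2 < p) = {2} := by
        ext q
        simp only [Finset.mem_filter, Finset.mem_singleton]
        constructor
        · rintro ⟨hq, hq2⟩
          have := (Nat.prime_of_mem_primeFactors hq).two_le
          omega
        · rintro rfl
          exact ⟨h2, by omega⟩
      rw [hTeq]
      simp only [Finset.prod_singleton, cfac, if_pos rfl]
      have h2k : (2 : ℝ) ^ (m.factorization 2) ≠ 0 := by positivity
      push_cast
      field_simp
      ring
    · have hTeq : m.primeFactors.filter (fun p => ¬ 2 < p) = ∅ := by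
        ext q
        simp only [Finset.mem_filter, Finset.notMem_empty, iff_false, not_and]
        intro hq hq2
        have := (Nat.prime_of_mem_primeFactors hq).two_le
        have : q = 2 := by omega
        exact h2 (this ▸ hq)
      have hk2 : m.factorization 2 = 0 :=
        Finsupp.notMem_support_iff.mp (by rwa [Nat.support_factorization])
      rw [hTeq, hk2]
      norm_num
  have hS : (∏ p ∈ m.primeFactors.filter (fun p => 2 < p),
        (p : ℝ) ^ (m.factorization p))
        * ∏ p ∈ m.primeFactors.filter (fun p => 2 < p),
            ((1 - 2 / (p : ℝ) ^ (m.factorization p + 1)) * (1 - 2 / (p : ℝ))⁻¹)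
      = ∏ p ∈ m.primeFactors.filter (fun p => 2 < p), cfac p (m.factorization p) := by
    rw [← Finset.prod_mul_distrib]
    refine Finset.prod_congr rfl fun p hp => ?_
    have hplt : 2 < p := (Finset.mem_filter.mp hp).2
    rw [cfac_eq_of_lt hplt]
  rw [hmprod, J, hsplit (fun p => (p : ℝ) ^ (m.factorization p)),
    hsplit (fun p => cfac p (m.factorization p)), ← hT, ← hS]
  ring

theorem sum_df_eq_mJ (m : ℕ) (hm : 0 < m) :
    ∑ d ∈ m.divisors, (d : ℝ) * f d = m * J m := by
  have hm0 : m ≠ 0 := hm.ne'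
  have h1 : ∑ d ∈ m.divisors, (d : ℝ) * f d = ((↑ζ : ArithmeticFunction ℝ) * g) m := by
    rw [coe_zeta_mul_apply]; rfl
  rw [h1, (isMultiplicative_zeta.natCast.mul g_mult).multiplicative_factorization _ hm0,
    mJ_eq_prod hm0, Finsupp.prod]
  rw [Nat.support_factorization]
  exact Finset.prod_congr rfl fun p hp =>
    zeta_g_prime_pow (Nat.prime_of_mem_primeFactors hp) _
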